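/- For the Shiriyayev–Roberts–Robbins–Siegmund changepoint detection scheme based on the method-of-moments estimators, the average run length to false alarm satisfies E_∞ N_A ≥ A for all 0 < A < ∞. -/

import Mathlib

open MeasureTheory ProbabilityTheory Filter
open scoped ENNReal NNReal

noncomputable section

/-- The Gamma(θ,1) density. -/
def gam (θ x : ℝ) : ℝ := gammaPDFReal θ 1 x

open Topology

open Topology

lemma measurable_Real_Gamma : Measurable Real.Gamma := by
  classical
  set S : Set ℝ := Set.range (fun n : ℕ => -(n : ℝ)) with hS
  have hSc : S.Countable := Set.countable_range _
  have hs : MeasurableSet S := hSc.measurableSet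
  have contf : ContinuousOn Real.Gamma S := by
    intro x hx
    obtain ⟨n, hn⟩ := hx
    simp only at hn
    have hball : S ∩ Metric.ball x 1 ⊆ {x} := by
      rintro y ⟨⟨m, hm⟩, hy⟩
      simp only at hm
      have h1 : |y - x| < 1 := by simpa [Real.dist_eq] using hy
      have h3 : |(n:ℝ) - (m:ℝ)| < 1 := by
        rw [← hm, ← hn] at h1
        have he : (n:ℝ) - m = (-(m:ℝ)) - (-(n:ℝ)) := by ring
        rw [he]
        exact h1
      obtain ⟨ha, hb⟩ := abs_lt.1 h3
      have hmn : m < n + 1 := by exact_mod_cast (by linarith : (m:ℝ) < (n:ℝ) + 1)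
      have hnm : n < m + 1 := by exact_mod_cast (by linarith : (n:ℝ) < (m:ℝ) + 1)
      have : n = m := by omega
      simp [Set.mem_singleton_iff, ← hm, ← hn, this]
    have hnhds : 𝓝[S] x ≤ pure x := by
      rw [nhdsWithin_restrict' S (Metric.ball_mem_nhds x one_pos)]
      calc 𝓝[S ∩ Metric.ball x 1] x ≤ 𝓝[{x}] x := nhdsWithin_mono x hball
        _ = pure x := nhdsWithin_singleton x
    exact (tendsto_pure_nhds Real.Gamma x).mono_left hnhds
  have contg : ContinuousOn Real.Gamma Sᶜ := by
    intro x hx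
    have hne : ∀ m : ℕ, x ≠ -(m:ℝ) := fun m hm => hx ⟨m, hm.symm⟩
    exact (Real.differentiableAt_Gamma hne).continuousAt.continuousWithinAt
  have h := ContinuousOn.measurable_piecewise contf contg hs
  simpa [Set.piecewise_same] using h

lemma measurable_gam' : Measurable (fun p : ℝ × ℝ => gammaPDFReal p.1 1 p.2) := by
  unfold ProbabilityTheory.gammaPDFReal
  refine Measurable.ite (measurable_snd measurableSet_Ici) ?_ measurable_const
  refine Measurable.mul ?_ ?_
  · refine Measurable.mul ?_ ?_
    · exact (measurable_const.pow measurable_fst).div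
        (measurable_Real_Gamma.comp measurable_fst)
    · exact measurable_snd.pow (measurable_fst.sub measurable_const)
  · exact ((measurable_const.mul measurable_snd).neg).exp

lemma gam_def (θ x : ℝ) : gam θ x = gammaPDFReal θ 1 x := rfl

lemma measurable_gam : Measurable (fun p : ℝ × ℝ => gam p.1 p.2) :=
  measurable_gam'

lemma gammaMeasure_nonpos {θ₀ : ℝ} : gammaMeasure θ₀ 1 {x : ℝ | x ≤ 0} = 0 := by
  have h : {x : ℝ | x ≤ 0} = Set.Iio 0 ∪ {0} := by
    ext x
    simp only [Set.mem_setOf_eq, Set.mem_union, Set.mem_Iio, Set.mem_singleton_iff]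
    exact le_iff_lt_or_eq
  rw [gammaMeasure, h]
  refine le_antisymm (le_trans (measure_union_le _ _) ?_) (zero_le)
  have h1 : volume.withDensity (gammaPDF θ₀ 1) (Set.Iio 0) = 0 := by
    rw [withDensity_apply _ measurableSet_Iio]
    rw [setLIntegral_congr_fun measurableSet_Iio
      (fun x (hx : x < 0) => gammaPDF_of_neg hx)]
    simp
  have h2 : volume.withDensity (gammaPDF θ₀ 1) {(0:ℝ)} = 0 := by
    rw [withDensity_apply _ (measurableSet_singleton 0)]
    rw [Measure.restrict_eq_zero.2 (by simp)]
    simp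
  simp [h1, h2]

lemma gam_ratio_lintegral {θ₀ θ : ℝ} (hθ₀ : 0 < θ₀) (hθ : 0 < θ) :
    ∫⁻ x, ENNReal.ofReal (gammaPDFReal θ 1 x / gammaPDFReal θ₀ 1 x)
      ∂(gammaMeasure θ₀ 1) = 1 := by
  have hmf : Measurable (gammaPDF θ₀ 1) :=
    ENNReal.measurable_ofReal.comp (measurable_gammaPDFReal θ₀ 1)
  have hmg : Measurable (fun x => ENNReal.ofReal (gammaPDFReal θ 1 x / gammaPDFReal θ₀ 1 x)) :=
    ENNReal.measurable_ofReal.comp ((measurable_gam.comp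
      (measurable_const.prodMk measurable_id)).div (measurable_gammaPDFReal θ₀ 1))
  rw [gammaMeasure, lintegral_withDensity_eq_lintegral_mul _ hmf hmg]
  have hae : ∀ᵐ x : ℝ, x ≠ 0 := by
    rw [ae_iff]
    simp [Real.volume_singleton, Set.setOf_eq_eq_singleton']
  rw [lintegral_congr_ae (g := gammaPDF θ 1) ?_]
  · exact lintegral_gammaPDF_eq_one hθ one_pos
  · filter_upwards [hae] with x hx
    simp only [Pi.mul_apply]
    rcases lt_or_gt_of_ne hx with hlt | hgt
    · rw [gammaPDF_of_neg hlt]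
      have : gammaPDFReal θ 1 x = 0 := by
        unfold ProbabilityTheory.gammaPDFReal
        rw [if_neg (not_le.2 hlt)]
      simp [gammaPDF, this, ProbabilityTheory.gammaPDFReal, not_le.2 hlt]
    · have h0 : 0 < gammaPDFReal θ₀ 1 x := gammaPDFReal_pos hθ₀ one_pos hgt
      have h1 : 0 ≤ gammaPDFReal θ 1 x / gammaPDFReal θ₀ 1 x :=
        div_nonneg (gammaPDFReal_nonneg hθ one_pos x) h0.le
      rw [gammaPDF, gammaPDF, ← ENNReal.ofReal_mul (gammaPDFReal_nonneg hθ₀ one_pos x)]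
      rw [mul_div_cancel₀ _ h0.ne']


/-- for the SRRS changepoint detection scheme based on the
method-of-moments estimators, the ARL to false alarm satisfies `E_∞ N_A ≥ A`
for all `0 < A < ∞`. -/
theorem srrs_arl_lower_bound
    {Ω : Type*} [MeasurableSpace Ω] (P : Measure Ω) [IsProbabilityMeasure P]
    (θ₀ : ℝ) (hθ₀ : 0 < θ₀)
    -- under P_∞ the observations are i.i.d. Gamma(θ₀,1)
    (X : ℕ → Ω → ℝ) (hXmeas : ∀ i, Measurable (X i))
    (hindep : iIndepFun X P)
    (hlaw : ∀ i, 1 ≤ i → Measure.map (X i) P = gammaMeasure θ₀ 1)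
    (s t : ℝ) (hs : 0 ≤ s) (ht : 0 ≤ t)
    -- θ_{n,k}: method-of-moments estimate from X_k,…,X_{n−1}
    (θnk : ℕ → ℕ → Ω → ℝ)
    (hθkk : ∀ k ω, θnk k k ω = if s = 0 ∨ t = 0 then θ₀ else s / t)
    (hθnk : ∀ k n ω, k < n →
      θnk k n ω = ((∑ i ∈ Finset.Ico k n, X i ω) + s) / (((n : ℝ) - (k : ℝ)) + t))
    (Λ : ℕ → ℕ → Ω → ℝ)
    (hΛ : ∀ k n ω, Λ k n ω = ∏ i ∈ Finset.Icc k n, gam (θnk k i ω) (X i ω) / gam θ₀ (X i ω))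
    (R : ℕ → Ω → ℝ) (hR : ∀ n ω, R n ω = ∑ k ∈ Finset.Icc 1 n, Λ k n ω)
    (A : ℝ) (hA : 0 < A)
    -- N_A ∈ [1,∞]: the first time n ≥ 1 that R_n ≥ A (∞ if no such n)
    (N : Ω → ℝ≥0∞)
    (hN : ∀ ω, N ω = ⨅ n ∈ {n : ℕ | 1 ≤ n ∧ A ≤ R n ω}, (n : ℝ≥0∞)) :
    ENNReal.ofReal A ≤ ∫⁻ ω, N ω ∂P := by
  classical
  set μ := gammaMeasure θ₀ 1 with hμdef
  haveI hPμ : IsProbabilityMeasure μ := isProbabilityMeasure_gammaMeasure hθ₀ one_pos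
  -- the a.e. positivity event
  set E : Set Ω := {ω | ∀ i, 1 ≤ i → 0 < X i ω} with hEdef
  have hE : ∀ᵐ ω ∂P, ω ∈ E := by
    have hXpos : ∀ i, 1 ≤ i → ∀ᵐ ω ∂P, 0 < X i ω := by
      intro i hi
      have h1 : P (X i ⁻¹' {x : ℝ | x ≤ 0}) = 0 := by
        have h2 := gammaMeasure_nonpos (θ₀ := θ₀)
        have hms : MeasurableSet {x : ℝ | x ≤ 0} :=
          measurableSet_le measurable_id measurable_const
        rw [← hμdef, ← hlaw i hi, Measure.map_apply (hXmeas i) hms] at h2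
        exact h2
      rw [ae_iff]
      convert h1 using 2
      ext ω; simp [not_lt]
    rw [hEdef]
    have : ∀ᵐ ω ∂P, ∀ i : ℕ, 1 ≤ i → 0 < X i ω := by
      rw [ae_all_iff]
      intro i
      by_cases hi : 1 ≤ i
      · filter_upwards [hXpos i hi] with ω h _; exact h
      · exact ae_of_all _ fun ω h => absurd h hi
    exact this
  -- measurability
  have mθ : ∀ k i, k ≤ i → Measurable (θnk k i) := by
    intro k i hki
    rcases eq_or_lt_of_le hki with h | h
    · subst h
      have : θnk k k = fun _ => if s = 0 ∨ t = 0 then θ₀ else s / t := funext (hθkk k)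
      rw [this]; exact measurable_const
    · have : θnk k i = fun ω => ((∑ j ∈ Finset.Ico k i, X j ω) + s) /
          (((i : ℝ) - (k : ℝ)) + t) := funext fun ω => hθnk k i ω h
      rw [this]
      exact ((Finset.measurable_sum _ fun j _ => hXmeas j).add_const s).div_const _
  have mΛ : ∀ k n, Measurable (Λ k n) := by
    intro k n
    have : Λ k n = fun ω => ∏ i ∈ Finset.Icc k n, gam (θnk k i ω) (X i ω) / gam θ₀ (X i ω) :=
      funext fun ω => hΛ k n ω
    rw [this]
    refine Finset.measurable_prod _ fun i hi => ?_
    have hki : k ≤ i := (Finset.mem_Icc.1 hi).1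
    exact (measurable_gam.comp ((mθ k i hki).prodMk (hXmeas i))).div
      (measurable_gam.comp (measurable_const.prodMk (hXmeas i)))
  have mR : ∀ n, Measurable (R n) := by
    intro n
    have : R n = fun ω => ∑ k ∈ Finset.Icc 1 n, Λ k n ω := funext fun ω => hR n ω
    rw [this]
    exact Finset.measurable_sum _ fun k _ => mΛ k n
  -- positivity on E
  have hθpos : ∀ k i, 1 ≤ k → k ≤ i → ∀ ω ∈ E, 0 < θnk k i ω := by
    intro k i hk1 hki ω hω
    rcases eq_or_lt_of_le hki with h | h
    · subst h
      rw [hθkk]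
      split_ifs with h'
      · exact hθ₀
      · push_neg at h'
        exact div_pos (lt_of_le_of_ne hs (Ne.symm h'.1)) (lt_of_le_of_ne ht (Ne.symm h'.2))
    · rw [hθnk k i ω h]
      apply div_pos
      · have hsum : 0 < ∑ j ∈ Finset.Ico k i, X j ω := by
          apply Finset.sum_pos
          · intro j hj
            exact hω j (le_trans hk1 (Finset.mem_Ico.1 hj).1)
          · exact ⟨k, Finset.mem_Ico.2 ⟨le_refl k, h⟩⟩
        linarith
      · have : (1:ℝ) ≤ (i:ℝ) - (k:ℝ) := by
          have : k + 1 ≤ i := h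
          have := Nat.cast_le (α := ℝ).2 this
          push_cast at this
          linarith
        linarith
  have hΛnn : ∀ k n, 1 ≤ k → ∀ ω ∈ E, 0 ≤ Λ k n ω := by
    intro k n hk1 ω hω
    rw [hΛ]
    apply Finset.prod_nonneg
    intro i hi
    have hki := (Finset.mem_Icc.1 hi).1
    apply div_nonneg
    · rw [gam_def]
      exact gammaPDFReal_nonneg (hθpos k i hk1 hki ω hω) one_pos _
    · rw [gam_def]
      exact gammaPDFReal_nonneg hθ₀ one_pos _
  -- key sets
  set G : ℕ → Set Ω := fun n => {ω | ∀ j, 1 ≤ j → j ≤ n → R j ω < A} with hGdef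
  set H : ℕ → Set Ω := fun n => {ω | (∀ j, 1 ≤ j → j < n → R j ω < A) ∧ A ≤ R n ω} with hHdef
  have mG : ∀ n, MeasurableSet (G n) := by
    intro n
    have : G n = ⋂ (j : ℕ), ⋂ (_ : 1 ≤ j), ⋂ (_ : j ≤ n), {ω | R j ω < A} := by
      ext ω; simp [hGdef, Set.mem_iInter]
    rw [this]
    exact MeasurableSet.iInter fun j => MeasurableSet.iInter fun _ =>
      MeasurableSet.iInter fun _ => measurableSet_lt (mR j) measurable_const
  have mH : ∀ n, MeasurableSet (H n) := by
    intro n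
    have : H n = (⋂ (j : ℕ), ⋂ (_ : 1 ≤ j), ⋂ (_ : j < n), {ω | R j ω < A}) ∩
        {ω | A ≤ R n ω} := by
      ext ω; simp [hHdef, Set.mem_iInter]
    rw [this]
    exact (MeasurableSet.iInter fun j => MeasurableSet.iInter fun _ =>
      MeasurableSet.iInter fun _ => measurableSet_lt (mR j) measurable_const).inter
      (measurableSet_le measurable_const (mR n))
  have hGanti : ∀ {a b : ℕ}, a ≤ b → G b ⊆ G a := by
    intro a b hab ω hω j hj1 hja
    exact hω j hj1 (le_trans hja hab)
  have hGN1 : ∀ m ω, ω ∈ G m → ((m+1 : ℕ) : ℝ≥0∞) ≤ N ω := by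
    intro m ω hω
    rw [hN]
    refine le_iInf₂ fun j hj => ?_
    obtain ⟨hj1, hjA⟩ := hj
    have hnle : ¬ j ≤ m := fun hjm => absurd hjA (not_le.2 (hω j hj1 hjm))
    have hj2 : m + 1 ≤ j := by omega
    exact_mod_cast hj2
  -- the martingale step
  have step : ∀ (m k : ℕ), 1 ≤ k → k ≤ m + 1 →
      ∫⁻ ω, (G m).indicator 1 ω * ENNReal.ofReal (Λ k (m+1) ω) ∂P
        = ∫⁻ ω, (G m).indicator 1 ω * ENNReal.ofReal (Λ k m ω) ∂P := by
    intro m k hk1 hkm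
    set n := m + 1 with hn
    have hmn : m < n := Nat.lt_succ_self m
    -- path-space versions
    set vθ : ℕ → ℕ → (ℕ → ℝ) → ℝ := fun k' n' v =>
      if k' = n' then (if s = 0 ∨ t = 0 then θ₀ else s / t)
      else ((∑ i ∈ Finset.Ico k' n', v i) + s) / (((n' : ℝ) - (k' : ℝ)) + t) with hvθ
    set vΛ : ℕ → ℕ → (ℕ → ℝ) → ℝ := fun k' n' v =>
      ∏ i ∈ Finset.Icc k' n', gam (vθ k' i v) (v i) / gam θ₀ (v i) with hvΛ
    set vR : ℕ → (ℕ → ℝ) → ℝ := fun n' v => ∑ k' ∈ Finset.Icc 1 n', vΛ k' n' v with hvR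
    set W : Ω → ℕ → ℝ := fun ω i => if h : i < n then X i ω else 0 with hW
    have hWa : ∀ ω i, i < n → W ω i = X i ω := fun ω i h => dif_pos h
    -- agreement lemmas
    have hvθa : ∀ (ω : Ω) (k' n' : ℕ), k' ≤ n' → n' ≤ n → vθ k' n' (W ω) = θnk k' n' ω := by
      intro ω k' n' hk'n' hn'n
      rcases eq_or_lt_of_le hk'n' with h | h
      · subst h
        rw [hθkk]
        simp [hvθ]
      · rw [hvθ]
        simp only [if_neg (Nat.ne_of_lt h)]
        rw [hθnk k' n' ω h]
        have hsum : ∑ i ∈ Finset.Ico k' n', W ω i = ∑ i ∈ Finset.Ico k' n', X i ω :=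
          Finset.sum_congr rfl fun i hi =>
            hWa ω i (lt_of_lt_of_le (Finset.mem_Ico.1 hi).2 hn'n)
        rw [hsum]
    have hvΛa : ∀ (ω : Ω) (k' n' : ℕ), n' < n → vΛ k' n' (W ω) = Λ k' n' ω := by
      intro ω k' n' hn'n
      rw [hvΛ, hΛ]
      apply Finset.prod_congr rfl
      intro i hi
      obtain ⟨hk'i, hin'⟩ := Finset.mem_Icc.1 hi
      have hin : i < n := lt_of_le_of_lt hin' hn'n
      rw [hvθa ω k' i hk'i hin.le, hWa ω i hin]
    have hvRa : ∀ (ω : Ω) (j : ℕ), j < n → vR j (W ω) = R j ω := by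
      intro ω j hj
      rw [hvR, hR]
      exact Finset.sum_congr rfl fun k' _ => hvΛa ω k' j hj
    -- measurability on path space
    have mvθ : ∀ k' n', Measurable (vθ k' n') := by
      intro k' n'
      rw [hvθ]
      by_cases h : k' = n'
      · simp only [if_pos h]; exact measurable_const
      · simp only [if_neg h]
        exact ((Finset.measurable_sum _ fun i _ => measurable_pi_apply i).add_const s).div_const _
    have mvΛ : ∀ k' n', Measurable (vΛ k' n') := by
      intro k' n'
      rw [hvΛ]
      refine Finset.measurable_prod _ fun i _ => ?_
      exact (measurable_gam.comp ((mvθ k' i).prodMk (measurable_pi_apply i))).div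
        (measurable_gam.comp (measurable_const.prodMk (measurable_pi_apply i)))
    have mvR : ∀ j, Measurable (vR j) := by
      intro j
      rw [hvR]
      exact Finset.measurable_sum _ fun k' _ => mvΛ k' j
    set GG : Set (ℕ → ℝ) := {v | ∀ j, 1 ≤ j → j ≤ m → vR j v < A} with hGG
    have mGG : MeasurableSet GG := by
      have : GG = ⋂ (j : ℕ), ⋂ (_ : 1 ≤ j), ⋂ (_ : j ≤ m), {v | vR j v < A} := by
        ext v; simp [hGG, Set.mem_iInter]
      rw [this]
      exact MeasurableSet.iInter fun j => MeasurableSet.iInter fun _ =>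
        MeasurableSet.iInter fun _ => measurableSet_lt (mvR j) measurable_const
    set F : (ℕ → ℝ) → ℝ≥0∞ := fun v => GG.indicator 1 v * ENNReal.ofReal (vΛ k m v) with hF
    have mF : Measurable F :=
      ((measurable_const.indicator mGG)).mul (ENNReal.measurable_ofReal.comp (mvΛ k m))
    set Θ : (ℕ → ℝ) → ℝ := vθ k n with hΘ
    set Hfun : (ℕ → ℝ) × ℝ → ℝ≥0∞ :=
      fun p => F p.1 * ENNReal.ofReal (gam (Θ p.1) p.2 / gam θ₀ p.2) with hHfun
    have mHfun : Measurable Hfun := by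
      refine (mF.comp measurable_fst).mul (ENNReal.measurable_ofReal.comp ?_)
      exact (measurable_gam.comp (((mvθ k n).comp measurable_fst).prodMk measurable_snd)).div
        (measurable_gam.comp (measurable_const.prodMk measurable_snd))
    have mW : Measurable W := by
      rw [hW]
      refine measurable_pi_lambda _ fun i => ?_
      by_cases h : i < n
      · simp only [dif_pos h]; exact hXmeas i
      · simp only [dif_neg h]; exact measurable_const
    -- indicator agreement
    have hind : ∀ ω, GG.indicator (1 : (ℕ → ℝ) → ℝ≥0∞) (W ω) = (G m).indicator 1 ω := by
      intro ω
      have hiff : W ω ∈ GG ↔ ω ∈ G m := by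
        constructor
        · intro h j hj1 hjm
          have := h j hj1 hjm
          rwa [hvRa ω j (lt_of_le_of_lt hjm hmn)] at this
        · intro h j hj1 hjm
          rw [hvRa ω j (lt_of_le_of_lt hjm hmn)]
          exact h j hj1 hjm
      simp only [Set.indicator_apply]
      rw [if_congr hiff rfl rfl]
      simp
    -- independence
    have hIndep : IndepFun W (X n) P := by
      have h1 := hindep.indepFun_finset (Finset.range n) {n}
        (by simp [Finset.disjoint_singleton_right]) hXmeas
      have φm : Measurable (fun v : (↥(Finset.range n) → ℝ) =>
          (fun i : ℕ => if h : i < n then v ⟨i, Finset.mem_range.2 h⟩ else 0)) := by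
        refine measurable_pi_lambda _ fun i => ?_
        by_cases h : i < n
        · simp only [dif_pos h]; exact measurable_pi_apply _
        · simp only [dif_neg h]; exact measurable_const
      have ψm : Measurable (fun v : (↥({n} : Finset ℕ) → ℝ) =>
          v ⟨n, Finset.mem_singleton_self n⟩) := measurable_pi_apply _
      exact h1.comp φm ψm
    have hmap : P.map (fun ω => (W ω, X n ω)) = (P.map W).prod μ := by
      have := (indepFun_iff_map_prod_eq_prod_map_map mW.aemeasurable
        (hXmeas n).aemeasurable).1 hIndep
      rw [this, hlaw n (Nat.succ_le_succ (Nat.zero_le m))]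
    -- the chain of equalities
    have e1 : ∫⁻ ω, (G m).indicator 1 ω * ENNReal.ofReal (Λ k n ω) ∂P
        = ∫⁻ ω, Hfun (W ω, X n ω) ∂P := by
      refine lintegral_congr_ae ?_
      filter_upwards [hE] with ω hω
      have hsplit : Λ k n ω = Λ k m ω * (gam (θnk k n ω) (X n ω) / gam θ₀ (X n ω)) := by
        rw [hΛ k n ω, hΛ k m ω, hn, Finset.prod_Icc_succ_top hkm]
      rw [hsplit, ENNReal.ofReal_mul (hΛnn k m hk1 ω hω)]
      rw [hHfun]
      simp only []
      rw [hF]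
      simp only []
      rw [hind ω, hvΛa ω k m hmn, hΘ, hvθa ω k n hkm (le_refl n)]
      ring
    have e2 : ∫⁻ ω, Hfun (W ω, X n ω) ∂P = ∫⁻ ω, (∫⁻ x, Hfun (W ω, x) ∂μ) ∂P := by
      have h1 : ∫⁻ ω, Hfun (W ω, X n ω) ∂P
          = ∫⁻ p, Hfun p ∂(P.map (fun ω => (W ω, X n ω))) :=
        (lintegral_map mHfun (mW.prodMk (hXmeas n))).symm
      rw [h1, hmap, lintegral_prod _ mHfun.aemeasurable]
      exact (lintegral_map (mHfun.lintegral_prod_right') mW)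
    have e3 : ∫⁻ ω, (∫⁻ x, Hfun (W ω, x) ∂μ) ∂P = ∫⁻ ω, F (W ω) ∂P := by
      refine lintegral_congr_ae ?_
      filter_upwards [hE] with ω hω
      have hΘpos : 0 < Θ (W ω) := by
        rw [hΘ, hvθa ω k n hkm (le_refl n)]
        exact hθpos k n hk1 hkm ω hω
      have hmr : Measurable (fun x => ENNReal.ofReal (gam (Θ (W ω)) x / gam θ₀ x)) :=
        ENNReal.measurable_ofReal.comp
          ((measurable_gam.comp (measurable_const.prodMk measurable_id)).div
            (measurable_gam.comp (measurable_const.prodMk measurable_id)))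
      calc ∫⁻ x, Hfun (W ω, x) ∂μ
          = ∫⁻ x, F (W ω) * ENNReal.ofReal (gam (Θ (W ω)) x / gam θ₀ x) ∂μ := rfl
        _ = F (W ω) * ∫⁻ x, ENNReal.ofReal (gam (Θ (W ω)) x / gam θ₀ x) ∂μ :=
            lintegral_const_mul _ hmr
        _ = F (W ω) * 1 := by
            rw [hμdef]
            congr 1
            simp only [gam_def]
            exact gam_ratio_lintegral hθ₀ hΘpos
        _ = F (W ω) := mul_one _
    have e4 : ∫⁻ ω, F (W ω) ∂P
        = ∫⁻ ω, (G m).indicator 1 ω * ENNReal.ofReal (Λ k m ω) ∂P := by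
      refine lintegral_congr fun ω => ?_
      rw [hF]
      simp only []
      rw [hind ω, hvΛa ω k m hmn]
    rw [← hn] at *
    rw [e1, e2, e3, e4]
  -- measurable integrands
  have mInd' : ∀ (m n j : ℕ), Measurable fun ω => (G m).indicator (1 : Ω → ℝ≥0∞) ω *
      ENNReal.ofReal (Λ j n ω) := fun m n j =>
    (measurable_const.indicator (mG m)).mul (ENNReal.measurable_ofReal.comp (mΛ j n))
  have mIndR : ∀ (m j : ℕ), Measurable fun ω => (G m).indicator (1 : Ω → ℝ≥0∞) ω *
      ENNReal.ofReal (R j ω) := fun m j =>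
    (measurable_const.indicator (mG m)).mul (ENNReal.measurable_ofReal.comp (mR j))
  -- expansion of the integral of R against an indicator
  have hexp : ∀ (m n : ℕ), ∫⁻ ω, (G m).indicator 1 ω * ENNReal.ofReal (R n ω) ∂P
      = ∑ j ∈ Finset.Icc 1 n, ∫⁻ ω, (G m).indicator 1 ω * ENNReal.ofReal (Λ j n ω) ∂P := by
    intro m n
    rw [← lintegral_finset_sum _ (fun j _ => mInd' m n j)]
    refine lintegral_congr_ae ?_
    filter_upwards [hE] with ω hω
    rw [hR n ω, ENNReal.ofReal_sum_of_nonneg (fun j hj =>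
      hΛnn j n (Finset.mem_Icc.1 hj).1 ω hω), Finset.mul_sum]
  -- one step of the supermartingale computation
  have Dstep : ∀ m : ℕ, ∫⁻ ω, (G m).indicator 1 ω * ENNReal.ofReal (R (m+1) ω) ∂P
      = P (G m) + ∫⁻ ω, (G m).indicator 1 ω * ENNReal.ofReal (R m ω) ∂P := by
    intro m
    rw [hexp m (m+1)]
    rw [Finset.sum_congr rfl (fun j hj => step m j (Finset.mem_Icc.1 hj).1
      (Finset.mem_Icc.1 hj).2)]
    rw [Finset.sum_Icc_succ_top (Nat.succ_le_succ (Nat.zero_le m))]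
    have htop : ∫⁻ ω, (G m).indicator 1 ω * ENNReal.ofReal (Λ (m+1) m ω) ∂P = P (G m) := by
      have h1 : ∀ ω, Λ (m+1) m ω = 1 := by
        intro ω
        rw [hΛ, Finset.Icc_eq_empty (by omega)]
        simp
      have h2 : ∀ ω, (G m).indicator (1 : Ω → ℝ≥0∞) ω * ENNReal.ofReal (Λ (m+1) m ω)
          = (G m).indicator 1 ω := by
        intro ω
        rw [h1 ω]
        simp
      rw [lintegral_congr h2, lintegral_indicator_one (mG m)]
    rw [htop, ← hexp m m, add_comm]
  -- one-step inequality
  have key : ∀ m : ℕ,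
      (∫⁻ ω, (G (m+1)).indicator 1 ω * ENNReal.ofReal (R (m+1) ω) ∂P)
        + ENNReal.ofReal A * P (H (m+1))
      ≤ P (G m) + ∫⁻ ω, (G m).indicator 1 ω * ENNReal.ofReal (R m ω) ∂P := by
    intro m
    rw [← Dstep m]
    have hpt : ∀ ω, (G (m+1)).indicator (1 : Ω → ℝ≥0∞) ω * ENNReal.ofReal (R (m+1) ω)
        + (H (m+1)).indicator (fun _ => ENNReal.ofReal A) ω
        ≤ (G m).indicator (1 : Ω → ℝ≥0∞) ω * ENNReal.ofReal (R (m+1) ω) := by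
      intro ω
      by_cases hg : ω ∈ G (m+1)
      · have hgm : ω ∈ G m := hGanti (Nat.le_succ m) hg
        have hh : ω ∉ H (m+1) := by
          intro hh
          exact absurd hh.2 (not_le.2 (hg (m+1) (Nat.succ_le_succ (Nat.zero_le m)) le_rfl))
        rw [Set.indicator_of_mem hg, Set.indicator_of_mem hgm,
          Set.indicator_of_notMem hh]
        simp
      · rw [Set.indicator_of_notMem hg]
        simp only [zero_mul, zero_add]
        by_cases hh : ω ∈ H (m+1)
        · have hgm : ω ∈ G m := by
            intro j hj1 hjm
            exact hh.1 j hj1 (by omega)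
          rw [Set.indicator_of_mem hh, Set.indicator_of_mem hgm]
          simp only [Pi.one_apply, one_mul]
          exact ENNReal.ofReal_le_ofReal hh.2
        · rw [Set.indicator_of_notMem hh]
          exact zero_le
    calc (∫⁻ ω, (G (m+1)).indicator 1 ω * ENNReal.ofReal (R (m+1) ω) ∂P)
          + ENNReal.ofReal A * P (H (m+1))
        = ∫⁻ ω, ((G (m+1)).indicator 1 ω * ENNReal.ofReal (R (m+1) ω)
            + (H (m+1)).indicator (fun _ => ENNReal.ofReal A) ω) ∂P := by
          rw [lintegral_add_left (mIndR (m+1) (m+1)) _,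
            lintegral_indicator_const (mH (m+1))]
      _ ≤ ∫⁻ ω, (G m).indicator 1 ω * ENNReal.ofReal (R (m+1) ω) ∂P :=
          lintegral_mono hpt
  -- iterate
  have main : ∀ m : ℕ,
      (∫⁻ ω, (G m).indicator 1 ω * ENNReal.ofReal (R m ω) ∂P)
        + ENNReal.ofReal A * ∑ j ∈ Finset.range m, P (H (j+1))
      ≤ ∑ j ∈ Finset.range m, P (G j) := by
    intro m
    induction m with
    | zero =>
      simp only [Finset.range_zero, Finset.sum_empty, mul_zero, add_zero]
      have h0 : ∀ ω, (G 0).indicator (1 : Ω → ℝ≥0∞) ω * ENNReal.ofReal (R 0 ω) = 0 := by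
        intro ω
        rw [hR 0 ω]
        simp
      rw [lintegral_congr h0]
      simp
    | succ m ih =>
      rw [Finset.sum_range_succ, Finset.sum_range_succ, mul_add]
      calc (∫⁻ ω, (G (m+1)).indicator 1 ω * ENNReal.ofReal (R (m+1) ω) ∂P)
            + (ENNReal.ofReal A * ∑ j ∈ Finset.range m, P (H (j+1))
              + ENNReal.ofReal A * P (H (m+1)))
          = ((∫⁻ ω, (G (m+1)).indicator 1 ω * ENNReal.ofReal (R (m+1) ω) ∂P)
              + ENNReal.ofReal A * P (H (m+1)))
            + ENNReal.ofReal A * ∑ j ∈ Finset.range m, P (H (j+1)) := by ring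
        _ ≤ (P (G m) + ∫⁻ ω, (G m).indicator 1 ω * ENNReal.ofReal (R m ω) ∂P)
            + ENNReal.ofReal A * ∑ j ∈ Finset.range m, P (H (j+1)) :=
            add_le_add_left (key m) _
        _ = ((∫⁻ ω, (G m).indicator 1 ω * ENNReal.ofReal (R m ω) ∂P)
              + ENNReal.ofReal A * ∑ j ∈ Finset.range m, P (H (j+1))) + P (G m) := by ring
        _ ≤ (∑ j ∈ Finset.range m, P (G j)) + P (G m) := add_le_add_left ih _
  -- E N dominates the partial sums of P (G j)
  have hNsum : ∀ m : ℕ, ∑ j ∈ Finset.range m, P (G j) ≤ ∫⁻ ω, N ω ∂P := by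
    intro m
    have hptN : ∀ ω, ∑ j ∈ Finset.range m, (G j).indicator (1 : Ω → ℝ≥0∞) ω ≤ N ω := by
      intro ω
      induction m with
      | zero => simp
      | succ m ih =>
        by_cases h : ω ∈ G m
        · have hall : ∀ j ∈ Finset.range (m+1), (G j).indicator (1 : Ω → ℝ≥0∞) ω = 1 := by
            intro j hj
            have hjm : j ≤ m := Nat.lt_succ_iff.1 (Finset.mem_range.1 hj)
            exact Set.indicator_of_mem (hGanti hjm h) _
          rw [Finset.sum_congr rfl hall, Finset.sum_const, Finset.card_range]
          simp only [nsmul_eq_mul, mul_one]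
          exact hGN1 m ω h
        · rw [Finset.sum_range_succ, Set.indicator_of_notMem h, add_zero]
          exact ih
    have h2 : ∫⁻ ω, ∑ j ∈ Finset.range m, (G j).indicator (1 : Ω → ℝ≥0∞) ω ∂P
        = ∑ j ∈ Finset.range m, ∫⁻ ω, (G j).indicator (1 : Ω → ℝ≥0∞) ω ∂P :=
      lintegral_finset_sum _ (fun j _ => measurable_const.indicator (mG j))
    calc ∑ j ∈ Finset.range m, P (G j)
        = ∑ j ∈ Finset.range m, ∫⁻ ω, (G j).indicator (1 : Ω → ℝ≥0∞) ω ∂P :=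
          Finset.sum_congr rfl fun j _ => (lintegral_indicator_one (mG j)).symm
      _ = ∫⁻ ω, ∑ j ∈ Finset.range m, (G j).indicator (1 : Ω → ℝ≥0∞) ω ∂P := h2.symm
      _ ≤ ∫⁻ ω, N ω ∂P := lintegral_mono hptN
  -- partition identity
  have hpart : ∀ m : ℕ, (∑ j ∈ Finset.range m, P (H (j+1))) + P (G m) = 1 := by
    intro m
    have hptH : ∀ ω, ∀ m : ℕ, (∑ j ∈ Finset.range m, (H (j+1)).indicator (1 : Ω → ℝ≥0∞) ω)
        + (G m).indicator (1 : Ω → ℝ≥0∞) ω = 1 := by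
      intro ω m
      induction m with
      | zero =>
        simp only [Finset.range_zero, Finset.sum_empty, zero_add]
        have : ω ∈ G 0 := by
          intro j hj1 hj0
          omega
        rw [Set.indicator_of_mem this]
        rfl
      | succ m ih =>
        rw [Finset.sum_range_succ, add_assoc]
        have hdec : (H (m+1)).indicator (1 : Ω → ℝ≥0∞) ω + (G (m+1)).indicator 1 ω
            = (G m).indicator 1 ω := by
          by_cases hg : ω ∈ G m
          · by_cases hr : R (m+1) ω < A
            · have hgs : ω ∈ G (m+1) := by
                intro j hj1 hjm
                rcases eq_or_lt_of_le hjm with h | h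
                · rw [show j = m + 1 from h]; exact hr
                · exact hg j hj1 (by omega)
              have hh : ω ∉ H (m+1) := fun hh => absurd hh.2 (not_le.2 hr)
              rw [Set.indicator_of_mem hgs, Set.indicator_of_notMem hh,
                Set.indicator_of_mem hg, zero_add]
            · have hh : ω ∈ H (m+1) := by
                refine ⟨fun j hj1 hjm => hg j hj1 (by omega), not_lt.1 hr⟩
              have hgs : ω ∉ G (m+1) := by
                intro hgs
                exact hr (hgs (m+1) (by omega) le_rfl)
              rw [Set.indicator_of_mem hh, Set.indicator_of_notMem hgs,
                Set.indicator_of_mem hg, add_zero]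
          · have hh : ω ∉ H (m+1) := by
              intro hh
              exact hg fun j hj1 hjm => hh.1 j hj1 (by omega)
            have hgs : ω ∉ G (m+1) := fun hgs => hg (hGanti (Nat.le_succ m) hgs)
            rw [Set.indicator_of_notMem hh, Set.indicator_of_notMem hgs,
              Set.indicator_of_notMem hg, add_zero]
        rw [hdec, ih]
    have h1 : ∫⁻ ω, ((∑ j ∈ Finset.range m, (H (j+1)).indicator (1 : Ω → ℝ≥0∞) ω)
        + (G m).indicator (1 : Ω → ℝ≥0∞) ω) ∂P = 1 := by
      rw [lintegral_congr (fun ω => hptH ω m)]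
      simp
    have hadd : ∫⁻ ω, ((∑ j ∈ Finset.range m, (H (j+1)).indicator (1 : Ω → ℝ≥0∞) ω)
          + (G m).indicator (1 : Ω → ℝ≥0∞) ω) ∂P
        = (∫⁻ ω, ∑ j ∈ Finset.range m, (H (j+1)).indicator (1 : Ω → ℝ≥0∞) ω ∂P)
          + ∫⁻ ω, (G m).indicator (1 : Ω → ℝ≥0∞) ω ∂P :=
      lintegral_add_right _ (measurable_const.indicator (mG m))
    have hsum : ∫⁻ ω, ∑ j ∈ Finset.range m, (H (j+1)).indicator (1 : Ω → ℝ≥0∞) ω ∂P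
        = ∑ j ∈ Finset.range m, ∫⁻ ω, (H (j+1)).indicator (1 : Ω → ℝ≥0∞) ω ∂P :=
      lintegral_finset_sum _ (fun j _ => measurable_const.indicator (mH (j+1)))
    rw [hadd, hsum, lintegral_indicator_one (mG m)] at h1
    calc (∑ j ∈ Finset.range m, P (H (j+1))) + P (G m)
        = (∑ j ∈ Finset.range m, ∫⁻ ω, (H (j+1)).indicator (1 : Ω → ℝ≥0∞) ω ∂P) + P (G m) :=
          by rw [Finset.sum_congr rfl fun j _ => (lintegral_indicator_one (mH (j+1))).symm]
      _ = 1 := h1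
  -- conclusion
  by_cases hcap : P (⋂ n, G n) = 0
  · have hmono : Antitone G := fun a b hab => hGanti hab
    have htend : Tendsto (fun m => P (G m)) atTop (𝓝 0) := by
      have h := tendsto_measure_iInter_atTop (μ := P) (s := G)
        (fun n => (mG n).nullMeasurableSet) hmono ⟨0, measure_ne_top P (G 0)⟩
      rw [hcap] at h
      exact h
    have heq : ∀ m : ℕ, ∑ j ∈ Finset.range m, P (H (j+1)) = 1 - P (G m) := fun m =>
      ENNReal.eq_sub_of_add_eq (measure_ne_top P (G m)) (hpart m)
    have htend2 : Tendsto (fun m => ∑ j ∈ Finset.range m, P (H (j+1))) atTop (𝓝 1) := by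
      have h : Tendsto (fun m => (1 : ℝ≥0∞) - P (G m)) atTop (𝓝 (1 - 0)) :=
        ENNReal.Tendsto.sub tendsto_const_nhds htend (Or.inl ENNReal.one_ne_top)
      rw [tsub_zero] at h
      exact h.congr fun m => (heq m).symm
    have htend3 : Tendsto (fun m => ENNReal.ofReal A * ∑ j ∈ Finset.range m, P (H (j+1)))
        atTop (𝓝 (ENNReal.ofReal A * 1)) :=
      ENNReal.Tendsto.const_mul htend2 (Or.inr ENNReal.ofReal_ne_top)
    rw [mul_one] at htend3
    refine le_of_tendsto htend3 (Filter.Eventually.of_forall fun m => ?_)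
    calc ENNReal.ofReal A * ∑ j ∈ Finset.range m, P (H (j+1))
        ≤ (∫⁻ ω, (G m).indicator 1 ω * ENNReal.ofReal (R m ω) ∂P)
          + ENNReal.ofReal A * ∑ j ∈ Finset.range m, P (H (j+1)) := le_add_self
      _ ≤ ∑ j ∈ Finset.range m, P (G j) := main m
      _ ≤ ∫⁻ ω, N ω ∂P := hNsum m
  · have hNtop : ∀ ω ∈ ⋂ n, G n, N ω = ∞ := by
      intro ω hω
      have hle : ∀ m : ℕ, (m : ℝ≥0∞) ≤ N ω := by
        intro m
        have h1 := hGN1 m ω (Set.mem_iInter.1 hω m)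
        calc (m : ℝ≥0∞) ≤ ((m + 1 : ℕ) : ℝ≥0∞) := by exact_mod_cast Nat.le_succ m
          _ ≤ N ω := h1
      refine ENNReal.eq_top_of_forall_nnreal_le fun r => ?_
      calc (r : ℝ≥0∞) ≤ ((⌈r⌉₊ : ℕ) : ℝ≥0∞) := by
            exact_mod_cast ENNReal.coe_le_coe.2 (Nat.le_ceil r)
        _ ≤ N ω := hle _
    have hSmeas : MeasurableSet (⋂ n, G n) := MeasurableSet.iInter fun n => mG n
    have h2 : ∫⁻ ω in (⋂ n, G n), N ω ∂P = ∞ := by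
      rw [setLIntegral_congr_fun (g := fun _ => (∞ : ℝ≥0∞)) hSmeas hNtop]
      rw [setLIntegral_const]
      exact ENNReal.top_mul hcap
    calc ENNReal.ofReal A ≤ ∞ := le_top
      _ = ∫⁻ ω in (⋂ n, G n), N ω ∂P := h2.symm
      _ ≤ ∫⁻ ω, N ω ∂P := setLIntegral_le_lintegral _ _
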